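/- Let q be a prime power, f(x) = x^n + a x^s + b ∈ F_q[x] with a, b ≠ 0 and n > s > 0, and δ = gcd(n, s, q-1). If C is the maximal size of a coset of a subgroup of F_q* on which f vanishes identically, and f has at least one root in F_q, then C = δ. -/

import Mathlib

theorem stmt19 (F : Type*) [Field F] [Fintype F]
    (n s : ℕ) (a b : F) (ha : a ≠ 0) (hb : b ≠ 0) (hs : 0 < s) (hsn : s < n)
    (δ : ℕ) (hδ : δ = Nat.gcd n (Nat.gcd s (Fintype.card F - 1)))
    (Cmax : ℕ)
    (hex : ∃ (H : Subgroup Fˣ) (g : Fˣ), Nat.card H = Cmax ∧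
      ∀ x ∈ H, ((g * x : Fˣ) : F) ^ n + a * ((g * x : Fˣ) : F) ^ s + b = 0)
    (hmax : ∀ (H : Subgroup Fˣ) (g : Fˣ),
      (∀ x ∈ H, ((g * x : Fˣ) : F) ^ n + a * ((g * x : Fˣ) : F) ^ s + b = 0) →
      Nat.card H ≤ Cmax)
    (hroot : ∃ α : F, α ^ n + a * α ^ s + b = 0) :
    Cmax = δ := by
  classical
  have hn : 0 < n := lt_trans hs hsn
  have hδpos : 0 < δ := by
    rw [hδ]; exact Nat.gcd_pos_of_pos_left _ hn
  have hδn : δ ∣ n := hδ ▸ Nat.gcd_dvd_left _ _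
  have hδs : δ ∣ s := hδ ▸ (Nat.gcd_dvd_right n _).trans (Nat.gcd_dvd_left s _)
  have hδq : δ ∣ Fintype.card F - 1 :=
    hδ ▸ (Nat.gcd_dvd_right n _).trans (Nat.gcd_dvd_right s _)
  have hq1 : Nat.card Fˣ = Fintype.card F - 1 := by
    rw [Nat.card_eq_fintype_card, Fintype.card_units]
  have hqpos : 0 < Fintype.card F - 1 := by
    have := Fintype.one_lt_card (α := F); omega
  -- lower bound: δ ≤ Cmax
  obtain ⟨α, hα⟩ := hroot
  have hα0 : α ≠ 0 := by
    intro h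
    rw [h, zero_pow hn.ne', zero_pow hs.ne'] at hα
    simp at hα
    exact hb hα
  obtain ⟨t, ht⟩ := IsCyclic.exists_generator (α := Fˣ)
  have hot : orderOf t = Fintype.card F - 1 := by
    rw [orderOf_eq_card_of_forall_mem_zpowers ht, hq1]
  set k := (Fintype.card F - 1) / δ with hk
  have hkdvd : k ∣ Fintype.card F - 1 := Nat.div_dvd_of_dvd hδq
  have hHcard : Nat.card (Subgroup.zpowers (t ^ k)) = δ := by
    rw [Nat.card_zpowers, orderOf_pow, hot, Nat.gcd_eq_right hkdvd,
      Nat.div_div_self hδq hqpos.ne']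
  have hordtk : orderOf (t ^ k) = δ := by
    rw [← Nat.card_zpowers, hHcard]
  have hmemδ : ∀ x ∈ Subgroup.zpowers (t ^ k), x ^ δ = 1 := by
    intro x hx
    obtain ⟨j, rfl⟩ := hx
    have h1 : (t ^ k) ^ δ = 1 := by rw [← hordtk, pow_orderOf_eq_one]
    calc ((t ^ k) ^ j) ^ δ = ((t ^ k) ^ δ) ^ j := by
          rw [← zpow_natCast ((t ^ k) ^ j), ← zpow_mul, mul_comm, zpow_mul,
            zpow_natCast]
      _ = 1 := by rw [h1, one_zpow]
  have hlow : δ ≤ Cmax := by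
    rw [← hHcard]
    apply hmax _ (Units.mk0 α hα0)
    intro x hx
    have hx1 : (x : F) ^ δ = 1 := by
      have := hmemδ x hx
      calc (x : F) ^ δ = ((x ^ δ : Fˣ) : F) := by rw [Units.val_pow_eq_pow_val]
        _ = 1 := by rw [this, Units.val_one]
    obtain ⟨n', hn'⟩ := hδn
    obtain ⟨s', hs'⟩ := hδs
    have hcoe : ((Units.mk0 α hα0 * x : Fˣ) : F) = α * (x : F) := by
      simp
    have hxn : (x : F) ^ n = 1 := by rw [hn', pow_mul, hx1, one_pow]
    have hxs : (x : F) ^ s = 1 := by rw [hs', pow_mul, hx1, one_pow]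
    rw [hcoe, mul_pow, mul_pow, hxn, hxs, mul_one, mul_one]
    exact hα
  -- upper bound: Cmax ∣ δ
  obtain ⟨H, g, hcard, hvan⟩ := hex
  obtain ⟨ζ0, hζ0⟩ := IsCyclic.exists_generator (α := H)
  set ζ : F := ((ζ0 : Fˣ) : F) with hζ
  have hordζ : orderOf ζ = Nat.card H := by
    have h1 : orderOf ((ζ0 : Fˣ)) = orderOf ζ0 :=
      orderOf_injective H.subtype Subtype.coe_injective ζ0
    have h2 : orderOf ζ = orderOf ((ζ0 : Fˣ)) :=
      orderOf_injective (Units.coeHom F) (fun _ _ h => Units.ext h) ((ζ0 : Fˣ))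
    rw [h2, h1, orderOf_eq_card_of_forall_mem_zpowers hζ0]
  set A : F := (g : F) ^ n with hA
  set B : F := a * (g : F) ^ s with hB
  have hAne : A ≠ 0 := pow_ne_zero _ (Units.ne_zero g)
  have hBne : B ≠ 0 := mul_ne_zero ha (pow_ne_zero _ (Units.ne_zero g))
  set u : F := ζ ^ n with hu
  set v : F := ζ ^ s with hv
  have hE : ∀ j : ℕ, A * u ^ j + B * v ^ j + b = 0 := by
    intro j
    have hmem : ((ζ0 : Fˣ)) ^ j ∈ H := H.pow_mem ζ0.2 j
    have h := hvan _ hmem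
    have hcoe : ((g * (ζ0 : Fˣ) ^ j : Fˣ) : F) = (g : F) * ζ ^ j := by
      simp [hζ]
    rw [hcoe, mul_pow, mul_pow, ← pow_mul, ← pow_mul, mul_comm j n, mul_comm j s,
      pow_mul, pow_mul] at h
    rw [hA, hB, hu, hv]
    calc (g:F)^n * (ζ^n)^j + a * (g:F)^s * (ζ^s)^j + b
        = (g:F)^n * (ζ^n)^j + a * ((g:F)^s * (ζ^s)^j) + b := by ring
      _ = 0 := h
  have E0 := hE 0
  have E1 := hE 1
  have E2 := hE 2
  simp only [pow_zero, pow_one, mul_one] at E0 E1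
  have key : (1 - u) * (1 - v) = 0 := by
    have hkey : b * ((1 - u) * (1 - v)) = 0 := by
      linear_combination u * v * E0 - (u + v) * E1 + E2
    rcases mul_eq_zero.mp hkey with h | h
    · exact absurd h hb
    · exact h
  have huv : u = 1 ∧ v = 1 := by
    rcases mul_eq_zero.mp key with h | h
    · have hu1 : u = 1 := by linear_combination -h
      refine ⟨hu1, ?_⟩
      have hBv : B * (v - 1) = 0 := by linear_combination E1 - E0 - A * hu1
      rcases mul_eq_zero.mp hBv with h' | h'
      · exact absurd h' hBne
      · linear_combination h'
    · have hv1 : v = 1 := by linear_combination -h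
      refine ⟨?_, hv1⟩
      have hAu : A * (u - 1) = 0 := by linear_combination E1 - E0 - B * hv1
      rcases mul_eq_zero.mp hAu with h' | h'
      · exact absurd h' hAne
      · linear_combination h'
  have hmn : Nat.card H ∣ n := by
    rw [← hordζ]; exact orderOf_dvd_of_pow_eq_one huv.1
  have hms : Nat.card H ∣ s := by
    rw [← hordζ]; exact orderOf_dvd_of_pow_eq_one huv.2
  have hmq : Nat.card H ∣ Fintype.card F - 1 := hq1 ▸ Subgroup.card_subgroup_dvd_card H
  have hdvd : Nat.card H ∣ δ := hδ ▸ Nat.dvd_gcd hmn (Nat.dvd_gcd hms hmq)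
  have := Nat.le_of_dvd hδpos hdvd
  omega
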